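/- Pointwise reformulation of the momentum equation (key identity in the proof of Lemma 3.1): Let U ⊆ ℝ² be open and let ρ, m : U → ℝ (arguments (t,x)) be such that ρ is continuously differentiable and ρ > 0 on U, and m is continuously differentiable with ∂_x m continuously differentiable in x. Let a, b ≥ 0, c > 0 and γ > 1 be constants, and set p(ρ) = c ρ^γ and P′(ρ) = c γ ρ^{γ−1}/(γ−1). Assume that on U: ∂_t ρ + ∂_x m = 0 and ∂_t m + ∂_x( m²/ρ + p(ρ) ) = a ρ ∂_x( ρ^{−2} ∂_x m ) − b |m| m/ρ. Then at every point of U: (1/ρ) ∂_t m − (m/(2ρ²)) ∂_t ρ = −∂_x( m²/(2ρ²) + P′(ρ) − (a/ρ²) ∂_x m ) − (m/(2ρ²)) ∂_x m − b |m| m/ρ². -/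

import Mathlib

/-- **Pointwise reformulation of the momentum equation** (key identity in the proof of
Lemma 3.1).  Let `U ⊆ ℝ²` be open and let `ρ, m : U → ℝ` (arguments `(t,x)`) be such that
`ρ` is continuously differentiable and positive on `U`, `m` is continuously differentiable,
and `∂ₓ m` is continuously differentiable in `x`; the functions `ρt, ρx, mt, mx, mxx`
denote the corresponding partial derivatives.  Assume the continuity equation
`∂ₜ ρ + ∂ₓ m = 0` and the momentum equation
`∂ₜ m + ∂ₓ(m²/ρ + c ρ^γ) = a ρ ∂ₓ(ρ⁻² ∂ₓ m) - b |m| m/ρ` hold on `U`.  Then at every point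
of `U` the function `x ↦ m²/(2ρ²) + P'(ρ) - (a/ρ²) ∂ₓ m` (with
`P'(ρ) = c γ/(γ-1) ρ^(γ-1)`) is differentiable in `x` with
`(1/ρ) ∂ₜ m - (m/(2ρ²)) ∂ₜ ρ = -∂ₓ( m²/(2ρ²) + P'(ρ) - (a/ρ²) ∂ₓ m )
  - (m/(2ρ²)) ∂ₓ m - b |m| m/ρ²`. -/
theorem momentum_pointwise_reformulation
    (U : Set (ℝ × ℝ)) (hU : IsOpen U)
    (ρ m ρt ρx mt mx mxx : ℝ × ℝ → ℝ)
    (a b c γ : ℝ) (ha : 0 ≤ a) (hb : 0 ≤ b) (hc : 0 < c) (hγ : 1 < γ)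
    (hρpos : ∀ p ∈ U, 0 < ρ p)
    (hder : ∀ p ∈ U,
      HasDerivAt (fun s => ρ (s, p.2)) (ρt p) p.1 ∧
      HasDerivAt (fun y => ρ (p.1, y)) (ρx p) p.2 ∧
      HasDerivAt (fun s => m (s, p.2)) (mt p) p.1 ∧
      HasDerivAt (fun y => m (p.1, y)) (mx p) p.2 ∧
      HasDerivAt (fun y => mx (p.1, y)) (mxx p) p.2)
    (hρc : ContinuousOn ρ U) (hmc : ContinuousOn m U)
    (hρtc : ContinuousOn ρt U) (hρxc : ContinuousOn ρx U)
    (hmtc : ContinuousOn mt U) (hmxc : ContinuousOn mx U)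
    (hmxxc : ∀ p ∈ U, ContinuousWithinAt (fun y => mxx (p.1, y)) {y | (p.1, y) ∈ U} p.2)
    (hmass : ∀ p ∈ U, ρt p + mx p = 0)
    (hmom : ∀ p ∈ U, ∃ F G : ℝ,
      HasDerivAt (fun y => m (p.1, y) ^ 2 / ρ (p.1, y) + c * ρ (p.1, y) ^ γ) F p.2 ∧
      HasDerivAt (fun y => mx (p.1, y) / ρ (p.1, y) ^ 2) G p.2 ∧
      mt p + F = a * ρ p * G - b * |m p| * m p / ρ p) :
    ∀ p ∈ U,
      HasDerivAt (fun y => m (p.1, y) ^ 2 / (2 * ρ (p.1, y) ^ 2)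
          + c * γ / (γ - 1) * ρ (p.1, y) ^ (γ - 1)
          - a / ρ (p.1, y) ^ 2 * mx (p.1, y))
        (-((1 / ρ p) * mt p - m p / (2 * ρ p ^ 2) * ρt p)
          - m p / (2 * ρ p ^ 2) * mx p - b * |m p| * m p / ρ p ^ 2) p.2 := by

  intro p hp
  obtain ⟨hρt, hρx, hmt, hmx, hmxx⟩ := hder p hp
  obtain ⟨F, G, hF, hG, hFG⟩ := hmom p hp
  have hrpos := hρpos p hp
  have hr : ρ p ≠ 0 := hrpos.ne'
  have hγ1 : γ - 1 ≠ 0 := sub_ne_zero.mpr hγ.ne'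
  -- note ρ (p.1, p.2) = ρ p definitionally
  have hρ2 : HasDerivAt (fun y => ρ (p.1, y) ^ 2) (2 * ρ p ^ 1 * ρx p) p.2 := by
    simpa using hρx.fun_pow 2
  have hr2 : ρ p ^ 2 ≠ 0 := pow_ne_zero 2 hr
  -- uniqueness for G
  have hG' : HasDerivAt (fun y => mx (p.1, y) / ρ (p.1, y) ^ 2)
      ((mxx p * ρ p ^ 2 - mx p * (2 * ρ p ^ 1 * ρx p)) / (ρ p ^ 2) ^ 2) p.2 :=
    hmxx.div hρ2 hr2
  have hGeq : G = (mxx p * ρ p ^ 2 - mx p * (2 * ρ p ^ 1 * ρx p)) / (ρ p ^ 2) ^ 2 :=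
    hG.unique hG'
  -- uniqueness for F
  have hm2 : HasDerivAt (fun y => m (p.1, y) ^ 2) (2 * m p ^ 1 * mx p) p.2 := by
    simpa using hmx.fun_pow 2
  have hrpow : HasDerivAt (fun y => ρ (p.1, y) ^ γ) (ρx p * γ * ρ p ^ (γ - 1)) p.2 :=
    hρx.rpow_const (Or.inl hr)
  have hF' : HasDerivAt (fun y => m (p.1, y) ^ 2 / ρ (p.1, y) + c * ρ (p.1, y) ^ γ)
      ((2 * m p ^ 1 * mx p * ρ p - m p ^ 2 * ρx p) / ρ p ^ 2
        + c * (ρx p * γ * ρ p ^ (γ - 1))) p.2 :=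
    (hm2.div hρx hr).add (hrpow.const_mul c)
  have hFeq : F = (2 * m p ^ 1 * mx p * ρ p - m p ^ 2 * ρx p) / ρ p ^ 2
      + c * (ρx p * γ * ρ p ^ (γ - 1)) := hF.unique hF'
  -- derivative of the target function
  have hden : HasDerivAt (fun y => 2 * ρ (p.1, y) ^ 2) (2 * (2 * ρ p ^ 1 * ρx p)) p.2 :=
    hρ2.const_mul 2
  have h2r2 : 2 * ρ p ^ 2 ≠ 0 := by positivity
  have hrpow1 : HasDerivAt (fun y => ρ (p.1, y) ^ (γ - 1))
      (ρx p * (γ - 1) * ρ p ^ (γ - 1 - 1)) p.2 := hρx.rpow_const (Or.inl hr)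
  have hD : HasDerivAt (fun y => m (p.1, y) ^ 2 / (2 * ρ (p.1, y) ^ 2)
        + c * γ / (γ - 1) * ρ (p.1, y) ^ (γ - 1)
        - a / ρ (p.1, y) ^ 2 * mx (p.1, y))
      ((2 * m p ^ 1 * mx p * (2 * ρ p ^ 2) - m p ^ 2 * (2 * (2 * ρ p ^ 1 * ρx p)))
          / (2 * ρ p ^ 2) ^ 2
        + c * γ / (γ - 1) * (ρx p * (γ - 1) * ρ p ^ (γ - 1 - 1))
        - a * ((mxx p * ρ p ^ 2 - mx p * (2 * ρ p ^ 1 * ρx p)) / (ρ p ^ 2) ^ 2)) p.2 := by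
    have h1 := (hm2.div hden h2r2).add (hrpow1.const_mul (c * γ / (γ - 1)))
    have h2 : HasDerivAt (fun y => a / ρ (p.1, y) ^ 2 * mx (p.1, y))
        (a * ((mxx p * ρ p ^ 2 - mx p * (2 * ρ p ^ 1 * ρx p)) / (ρ p ^ 2) ^ 2)) p.2 := by
      have hfun : (fun y => a / ρ (p.1, y) ^ 2 * mx (p.1, y))
          = fun y => a * (mx (p.1, y) / ρ (p.1, y) ^ 2) := by
        funext y; ring
      rw [hfun]
      exact hG'.const_mul a
    exact h1.sub h2
  convert hD using 1
  have hmassp := hmass p hp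
  have hρt' : ρt p = -mx p := by linarith
  have hmt' : mt p = a * ρ p * G - b * |m p| * m p / ρ p - F := by linarith
  rw [hmt', hρt', hGeq, hFeq]
  have e1 : ρ p ^ (γ - 1) = ρ p ^ γ / ρ p := Real.rpow_sub_one hr γ
  have e2 : ρ p ^ (γ - 1 - 1) = ρ p ^ (γ - 1) / ρ p := Real.rpow_sub_one hr (γ - 1)
  rw [e2, e1]
  field_simp
  ring
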